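/- Every simple graph on 8 vertices whose clique number equals 2 and independence number equals 3 has at least 10 and at most 12 edges. -/

import Mathlib

open Finset SimpleGraph

namespace Stmt1Aux

variable (G : SimpleGraph (Fin 8)) [DecidableRel G.Adj]

/-- A pairwise adjacent finset in a triangle-free graph has at most 2 elements. -/
lemma clique_card_le (h3 : G.CliqueFree 3) (S : Finset (Fin 8))
    (hS : ∀ a ∈ S, ∀ b ∈ S, a ≠ b → G.Adj a b) : S.card ≤ 2 := by
  by_contra h
  push_neg at h
  obtain ⟨T, hTS, hT3⟩ := S.exists_subset_card_eq (n := 3) (by omega)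
  exact h3 T ⟨fun a ha b hb hab => hS a (hTS ha) b (hTS hb) hab, hT3⟩

/-- A pairwise nonadjacent finset has at most 3 elements when `Gᶜ` is `K₄`-free. -/
lemma indep_card_le (h4 : Gᶜ.CliqueFree 4) (S : Finset (Fin 8))
    (hS : ∀ a ∈ S, ∀ b ∈ S, a ≠ b → ¬G.Adj a b) : S.card ≤ 3 := by
  by_contra h
  push_neg at h
  obtain ⟨T, hTS, hT4⟩ := S.exists_subset_card_eq (n := 4) (by omega)
  refine h4 T ⟨fun a ha b hb hab => ?_, hT4⟩
  rw [SimpleGraph.compl_adj]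
  exact ⟨hab, hS a (hTS ha) b (hTS hb) hab⟩

lemma no_triangle (h3 : G.CliqueFree 3) {a b c : Fin 8}
    (hab : G.Adj a b) (hac : G.Adj a c) (hbc : G.Adj b c) : False :=
  h3 {a, b, c} (SimpleGraph.is3Clique_triple_iff.mpr ⟨hab, hac, hbc⟩)

lemma no_indep4 (h4 : Gᶜ.CliqueFree 4) {a b c d : Fin 8}
    (hab : ¬G.Adj a b) (hac : ¬G.Adj a c) (had : ¬G.Adj a d)
    (hbc : ¬G.Adj b c) (hbd : ¬G.Adj b d) (hcd : ¬G.Adj c d)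
    (nab : a ≠ b) (nac : a ≠ c) (nad : a ≠ d)
    (nbc : b ≠ c) (nbd : b ≠ d) (ncd : c ≠ d) : False := by
  have hba : ¬G.Adj b a := fun h => hab h.symm
  have hca : ¬G.Adj c a := fun h => hac h.symm
  have hda : ¬G.Adj d a := fun h => had h.symm
  have hcb : ¬G.Adj c b := fun h => hbc h.symm
  have hdb : ¬G.Adj d b := fun h => hbd h.symm
  have hdc : ¬G.Adj d c := fun h => hcd h.symm
  have hcard : ({a, b, c, d} : Finset (Fin 8)).card = 4 := by
    rw [Finset.card_insert_of_notMem (by simp [nab, nac, nad]),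
      Finset.card_insert_of_notMem (by simp [nbc, nbd]),
      Finset.card_insert_of_notMem (by simp [ncd]), Finset.card_singleton]
  have hle := indep_card_le G h4 {a, b, c, d} ?_
  · omega
  · intro p hp q hq hne
    simp only [Finset.mem_insert, Finset.mem_singleton] at hp hq
    rcases hp with rfl | rfl | rfl | rfl <;> rcases hq with rfl | rfl | rfl | rfl <;>
      first
        | exact absurd rfl hne
        | assumption

/-- Common non-neighbors of a non-adjacent pair form a clique, hence there are at most 2. -/
lemma common_nonnbrs (h3 : G.CliqueFree 3) (h4 : Gᶜ.CliqueFree 4) (v x : Fin 8)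
    (hvx : ¬G.Adj v x) (hne : v ≠ x) :
    (univ.filter fun y => ¬G.Adj v y ∧ ¬G.Adj x y ∧ y ≠ v ∧ y ≠ x).card ≤ 2 := by
  apply clique_card_le G h3
  intro a ha b hb hab
  simp only [mem_filter, mem_univ, true_and] at ha hb
  by_contra hnadj
  exact no_indep4 G h4 hvx ha.1 hb.1 ha.2.1 hb.2.1 hnadj hne
    (Ne.symm ha.2.2.1) (Ne.symm hb.2.2.1) (Ne.symm ha.2.2.2) (Ne.symm hb.2.2.2) hab

lemma deg_le (h3 : G.CliqueFree 3) (h4 : Gᶜ.CliqueFree 4) (v : Fin 8) :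
    G.degree v ≤ 3 := by
  rw [← SimpleGraph.card_neighborFinset_eq_degree]
  apply indep_card_le G h4
  intro a ha b hb hab hadj
  rw [SimpleGraph.mem_neighborFinset] at ha hb
  exact no_triangle G h3 ha hb hadj

/-- The non-neighborhood of `v` (excluding `v`). -/
def A (v : Fin 8) : Finset (Fin 8) := (insert v (G.neighborFinset v))ᶜ

lemma mem_A {v x : Fin 8} : x ∈ A G v ↔ x ≠ v ∧ ¬G.Adj v x := by
  simp [A, not_or]

lemma card_A (v : Fin 8) : (A G v).card = 7 - G.degree v := by
  rw [A, Finset.card_compl,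
    Finset.card_insert_of_notMem (G.notMem_neighborFinset_self v),
    SimpleGraph.card_neighborFinset_eq_degree]
  simp

/-- The triple-counting predicate. -/
def P (v x y : Fin 8) : Prop :=
  G.Adj x y ∧ ¬G.Adj v x ∧ ¬G.Adj v y ∧ x ≠ v ∧ y ≠ v ∧ y ≠ x

instance (v x y : Fin 8) : Decidable (P G v x y) := by unfold P; infer_instance

lemma per_vertex_lb (h3 : G.CliqueFree 3) (h4 : Gᶜ.CliqueFree 4) (v : Fin 8)
    (x : Fin 8) (hx : x ∈ A G v) :
    4 - G.degree v ≤ (((A G v).erase x).filter fun y => G.Adj x y).card := by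
  have hdv := deg_le G h3 h4 v
  have hxv : x ≠ v := (mem_A G).mp hx |>.1
  have hvx : ¬G.Adj v x := (mem_A G).mp hx |>.2
  have hsplit := Finset.card_filter_add_card_filter_not
    (s := (A G v).erase x) (p := fun y => G.Adj x y)
  have hcard : ((A G v).erase x).card = 6 - G.degree v := by
    rw [Finset.card_erase_of_mem hx, card_A]
    omega
  have hneg : (((A G v).erase x).filter fun y => ¬G.Adj x y).card ≤ 2 := by
    refine le_trans (Finset.card_le_card ?_) (common_nonnbrs G h3 h4 v x hvx (Ne.symm hxv))
    intro y hy
    simp only [mem_filter, Finset.mem_erase, mem_A] at hy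
    simp only [mem_filter, mem_univ, true_and]
    exact ⟨hy.1.2.2, hy.2, hy.1.2.1, hy.1.1⟩
  omega

lemma inner_as_filter (v x : Fin 8) (hx : x ∈ A G v) :
    ((A G v).erase x).filter (fun y => G.Adj x y) =
      univ.filter fun y => P G v x y := by
  ext y
  simp only [Finset.mem_filter, Finset.mem_erase, mem_A, Finset.mem_univ, true_and]
  simp only [P]
  constructor
  · rintro ⟨⟨hyx, hyv, hvy⟩, hxy⟩
    exact ⟨hxy, (mem_A G).mp hx |>.2, hvy, (mem_A G).mp hx |>.1, hyv, hyx⟩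
  · rintro ⟨hxy, _, hvy, _, hyv, hyx⟩
    exact ⟨⟨hyx, hyv, hvy⟩, hxy⟩

/-- Counting `N` grouped by vertex `v`: lower bound. -/
lemma count_lb (h3 : G.CliqueFree 3) (h4 : Gᶜ.CliqueFree 4) :
    ∑ v, (7 - G.degree v) * (4 - G.degree v) ≤
      ∑ v, ∑ x, (univ.filter fun y => P G v x y).card := by
  refine Finset.sum_le_sum fun v _ => ?_
  calc (7 - G.degree v) * (4 - G.degree v)
      = (A G v).card • (4 - G.degree v) := by rw [card_A, smul_eq_mul]
    _ ≤ ∑ x ∈ A G v, (((A G v).erase x).filter fun y => G.Adj x y).card :=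
        Finset.card_nsmul_le_sum _ _ _ (fun x hx => per_vertex_lb G h3 h4 v x hx)
    _ = ∑ x ∈ A G v, (univ.filter fun y => P G v x y).card :=
        Finset.sum_congr rfl fun x hx => by rw [inner_as_filter G v x hx]
    _ ≤ ∑ x, (univ.filter fun y => P G v x y).card := by
        refine Finset.sum_le_sum_of_subset_of_nonneg (Finset.subset_univ _)
          fun x _ _ => Nat.zero_le _

/-- Counting `N` grouped by the edge `(x, y)`: exact value. -/
lemma count_eq (h3 : G.CliqueFree 3) :
    ∑ v, ∑ x, (univ.filter fun y => P G v x y).card =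
      ∑ x, ∑ y, if G.Adj x y then 8 - (G.degree x + G.degree y) else 0 := by
  have swap : ∑ v, ∑ x, (univ.filter fun y => P G v x y).card =
      ∑ x, ∑ y, (univ.filter fun v => P G v x y).card := by
    simp only [Finset.card_filter]
    rw [Finset.sum_comm]
    exact Finset.sum_congr rfl fun x _ => Finset.sum_comm
  rw [swap]
  refine Finset.sum_congr rfl fun x _ => Finset.sum_congr rfl fun y _ => ?_
  by_cases hxy : G.Adj x y
  · rw [if_pos hxy]
    have hset : (univ.filter fun v => P G v x y) =
        (G.neighborFinset x ∪ G.neighborFinset y)ᶜ := by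
      ext v
      simp only [Finset.mem_filter, Finset.mem_univ, true_and, Finset.mem_compl, Finset.mem_union,
        SimpleGraph.mem_neighborFinset, not_or]
      simp only [P]
      constructor
      · rintro ⟨_, hvx, hvy, _, _, _⟩
        exact ⟨fun h => hvx h.symm, fun h => hvy h.symm⟩
      · rintro ⟨hxv, hyv⟩
        refine ⟨hxy, fun h => hxv h.symm, fun h => hyv h.symm, ?_, ?_, ?_⟩
        · rintro rfl; exact hyv hxy.symm
        · rintro rfl; exact hxv hxy
        · exact hxy.ne'
    have hdisj : Disjoint (G.neighborFinset x) (G.neighborFinset y) := by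
      rw [Finset.disjoint_left]
      intro w hw hw'
      rw [SimpleGraph.mem_neighborFinset] at hw hw'
      exact no_triangle G h3 hxy hw hw'
    rw [hset, Finset.card_compl, Finset.card_union_of_disjoint hdisj,
      SimpleGraph.card_neighborFinset_eq_degree,
      SimpleGraph.card_neighborFinset_eq_degree]
    simp
  · rw [if_neg hxy]
    have : (univ.filter fun v => P G v x y) = ∅ :=
      Finset.filter_eq_empty_iff.mpr fun v _ hp => hxy hp.1
    rw [this, Finset.card_empty]

lemma sum_ite_adj (c : Fin 8 → ℕ) (x : Fin 8) :
    ∑ y, (if G.Adj x y then c x else 0) = c x * G.degree x := by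
  rw [← Finset.sum_filter]
  have : (univ.filter fun y => G.Adj x y) = G.neighborFinset x := by
    ext y; simp [SimpleGraph.mem_neighborFinset]
  rw [Finset.sum_const, this, SimpleGraph.card_neighborFinset_eq_degree,
    smul_eq_mul, mul_comm]

/-- The master inequality. -/
lemma main_ineq (h3 : G.CliqueFree 3) (h4 : Gᶜ.CliqueFree 4) :
    ∑ v, (7 - G.degree v) * (4 - G.degree v) +
      2 * ∑ v, G.degree v * G.degree v ≤ 8 * ∑ v, G.degree v := by
  have hdeg := deg_le G h3 h4
  have h1 := (count_lb G h3 h4).trans_eq (count_eq G h3)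
  -- Evaluate the RHS of h1.
  have key : ∑ x, ∑ y, (if G.Adj x y then 8 - (G.degree x + G.degree y) else 0) +
      2 * ∑ v, G.degree v * G.degree v = 8 * ∑ v, G.degree v := by
    have split : ∀ x y : Fin 8,
        (if G.Adj x y then 8 - (G.degree x + G.degree y) else 0) +
        ((if G.Adj x y then G.degree x else 0) + (if G.Adj x y then G.degree y else 0)) =
        (if G.Adj x y then 8 else 0) := by
      intro x y
      by_cases h : G.Adj x y
      · have hx := hdeg x; have hy := hdeg y
        simp only [if_pos h]; omega
      · simp [h]
    calc ∑ x, ∑ y, (if G.Adj x y then 8 - (G.degree x + G.degree y) else 0) +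
          2 * ∑ v, G.degree v * G.degree v
        = ∑ x, ∑ y, ((if G.Adj x y then 8 - (G.degree x + G.degree y) else 0) +
            ((if G.Adj x y then G.degree x else 0) + (if G.Adj x y then G.degree y else 0))) := by
          simp only [Finset.sum_add_distrib]
          have e1 : ∑ x, ∑ y, (if G.Adj x y then G.degree x else 0) =
              ∑ v, G.degree v * G.degree v :=
            Finset.sum_congr rfl fun x _ => sum_ite_adj G (fun v => G.degree v) x
          have e2 : ∑ x : Fin 8, ∑ y, (if G.Adj x y then G.degree y else 0) =
              ∑ v, G.degree v * G.degree v := by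
            rw [Finset.sum_comm]
            refine Finset.sum_congr rfl fun y _ => ?_
            have : ∀ x, (if G.Adj x y then G.degree y else 0) =
                (if G.Adj y x then G.degree y else 0) := by
              intro x
              by_cases h : G.Adj x y
              · rw [if_pos h, if_pos h.symm]
              · rw [if_neg h, if_neg fun h' => h h'.symm]
            simp only [this]
            exact sum_ite_adj G (fun v => G.degree v) y
          rw [e1, e2]; ring
      _ = ∑ x, ∑ y, (if G.Adj x y then 8 else 0) := by
          refine Finset.sum_congr rfl fun x _ => Finset.sum_congr rfl fun y _ => split x y
      _ = ∑ x, 8 * G.degree x :=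
          Finset.sum_congr rfl fun x _ => sum_ite_adj G (fun _ => 8) x
      _ = 8 * ∑ v, G.degree v := by rw [Finset.mul_sum]
  omega

end Stmt1Aux

theorem stmt_1 (G : SimpleGraph (Fin 8)) [DecidableRel G.Adj]
    (hclique : (∃ s : Finset (Fin 8), G.IsNClique 2 s) ∧ G.CliqueFree 3)
    (hindep : (∃ s : Finset (Fin 8), Gᶜ.IsNClique 3 s) ∧ Gᶜ.CliqueFree 4) :
    10 ≤ G.edgeFinset.card ∧ G.edgeFinset.card ≤ 12 := by
  have h3 := hclique.2
  have h4 := hindep.2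
  have hdeg := Stmt1Aux.deg_le G h3 h4
  have hmain := Stmt1Aux.main_ineq G h3 h4
  have hpt : ∀ v : Fin 8, 4 * G.degree v + 10 ≤
      (7 - G.degree v) * (4 - G.degree v) + 2 * (G.degree v * G.degree v) := by
    intro v
    have := hdeg v
    interval_cases h : G.degree v <;> norm_num
  have hsum : ∑ v : Fin 8, (4 * G.degree v + 10) ≤
      ∑ v : Fin 8, ((7 - G.degree v) * (4 - G.degree v) + 2 * (G.degree v * G.degree v)) :=
    Finset.sum_le_sum fun v _ => hpt v
  have hE : ∑ v, G.degree v = 2 * G.edgeFinset.card :=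
    G.sum_degrees_eq_twice_card_edges
  have hub : ∑ v, G.degree v ≤ 24 := by
    calc ∑ v, G.degree v ≤ ∑ _v : Fin 8, 3 := Finset.sum_le_sum fun v _ => hdeg v
      _ = 24 := by simp
  have h1 : ∑ v : Fin 8, (4 * G.degree v + 10) = 4 * ∑ v, G.degree v + 80 := by
    rw [Finset.sum_add_distrib, ← Finset.mul_sum]
    simp
  have h2 : ∑ v : Fin 8, ((7 - G.degree v) * (4 - G.degree v) + 2 * (G.degree v * G.degree v)) =
      ∑ v, (7 - G.degree v) * (4 - G.degree v) + 2 * ∑ v, G.degree v * G.degree v := by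
    rw [Finset.sum_add_distrib, ← Finset.mul_sum]
  rw [h1, h2] at hsum
  omega
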